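/- Let A be a symmetric operator on a complex Hilbert space whose matrix with respect to an orthonormal basis (e_p) is tridiagonal with zero diagonal: A e_p = b_p·e_{p+1} + c_p·e_{p-1} with b_p = -i·e^{iθ}·√(((i+(p+1)k)!)/((i+pk)!)), c_p = conj(b_{p-1}), defined on the span of the basis, where k ≥ 3 and 0 ≤ i ≤ k-1. If ∑_p d_p² < ∞ for the positive solution (d_p) of the associated recurrence d_{p+1} = ((i+pk)!/√((i+pk-k)!(i+pk+k)!))·d_{p-1} + √((i+pk)!/(i+pk+k)!)·d_p with d_{-1}=0, d_0=1, then there exists a nonzero f in the Hilbert space with ⟨(A+i)e_p, f⟩ = 0 for all p; i.e., A is not essentially selfadjoint. -/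

import Mathlib

open Nat

/-- If the positive solution `(d_p)` of the associated recurrence is square-summable, then
there is a nonzero deficiency vector `f` orthogonal to `(A + i)e_p` for all `p`, where the
Jacobi-type operator `A` acts on the basis by `A e_p = b_p e_{p+1} + c_p e_{p-1}`
(`c_0` term absent); hence `A` is not essentially selfadjoint. -/
theorem stmt_19 {H : Type*} [NormedAddCommGroup H] [InnerProductSpace ℂ H]
    [CompleteSpace H]
    (e : ℕ → H) (he : Orthonormal ℂ e)
    (k i : ℕ) (hk : 3 ≤ k) (hi : i ≤ k - 1) (θ : ℝ)
    (b : ℕ → ℂ)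
    (hb : ∀ p : ℕ, b p = -Complex.I * Complex.exp (Complex.I * θ) *
      (Real.sqrt (((i + (p + 1) * k)! : ℝ) / ((i + p * k)! : ℝ)) : ℂ))
    (c : ℕ → ℂ) (hc : ∀ p : ℕ, c (p + 1) = (starRingEnd ℂ) (b p))
    (Ae : ℕ → H)
    (hAe : ∀ p : ℕ, Ae p = b p • e (p + 1) +
      (if p = 0 then 0 else c p • e (p - 1)))
    (d : ℕ → ℝ)
    (hd0 : d 0 = 1)
    (hrec : ∀ p : ℕ, d (p + 1) =
      ((i + p * k)! : ℝ) /
          Real.sqrt (((i + p * k - k)! : ℝ) * ((i + p * k + k)! : ℝ)) *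
          (if p = 0 then 0 else d (p - 1))
        + Real.sqrt (((i + p * k)! : ℝ) / ((i + p * k + k)! : ℝ)) * d p)
    (hdpos : ∀ p : ℕ, 0 < d p)
    (hsum : Summable (fun p : ℕ => d p ^ 2)) :
    ∃ f : H, f ≠ 0 ∧ ∀ p : ℕ, (inner ℂ (Ae p + Complex.I • e p) f : ℂ) = 0 := by
  classical
  have hfac : ∀ n : ℕ, (0:ℝ) < (n ! : ℝ) := fun n => by exact_mod_cast Nat.factorial_pos n
  -- the key real identity
  have key : ∀ p : ℕ,
      Real.sqrt (((i + (p+1)*k)! : ℝ) / ((i + p*k)! : ℝ)) * d (p+1)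
        = (if p = 0 then 0 else
            Real.sqrt (((i + p*k)! : ℝ) / ((i + (p-1)*k)! : ℝ)) * d (p-1)) + d p := by
    intro p
    have h1 : i + (p+1)*k = i + p*k + k := by ring
    rw [hrec p, h1]
    have hA := hfac (i + p*k)
    have hB := hfac (i + p*k + k)
    cases p with
    | zero =>
      rw [if_pos rfl, if_pos rfl, mul_zero, zero_add, hd0, mul_one]
      rw [← Real.sqrt_mul (by positivity)]
      rw [show ((i+0*k+k)! : ℝ) / ((i+0*k)! : ℝ) * (((i+0*k)! : ℝ) / ((i+0*k+k)! : ℝ)) = 1 by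
        have h4 := hfac (i+0*k); have h5 := hfac (i+0*k+k); field_simp]
      rw [Real.sqrt_one]; norm_num
    | succ q =>
      have h2 : i + (q+1)*k - k = i + q*k := by
        have h3 : i + (q+1)*k = (i + q*k) + k := by ring
        omega
      rw [if_neg (Nat.succ_ne_zero q), if_neg (Nat.succ_ne_zero q), Nat.succ_sub_one, h2]
      have hC := hfac (i + q*k)
      set A : ℝ := ((i + (q+1)*k)! : ℝ)
      set B : ℝ := ((i + (q+1)*k + k)! : ℝ)
      set C : ℝ := ((i + q*k)! : ℝ)
      have ha : (0:ℝ) < Real.sqrt A := Real.sqrt_pos.mpr hA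
      have hb' : (0:ℝ) < Real.sqrt B := Real.sqrt_pos.mpr hB
      have hcc : (0:ℝ) < Real.sqrt C := Real.sqrt_pos.mpr hC
      have hAsq : Real.sqrt A * Real.sqrt A = A := Real.mul_self_sqrt hA.le
      rw [Real.sqrt_div hB.le, Real.sqrt_div hA.le, Real.sqrt_div hA.le,
        Real.sqrt_mul hC.le]
      field_simp
      linear_combination (-(d q)) * hAsq
  -- the phase
  set ω : ℂ := Complex.exp (Complex.I * θ) with hω
  have hωconjeq : (starRingEnd ℂ) ω = Complex.exp (-(Complex.I * θ)) := by
    rw [hω, ← Complex.exp_conj]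
    congr 1
    simp [Complex.conj_ofReal]
  have hωconj : (starRingEnd ℂ) ω * ω = 1 := by
    rw [hωconjeq, hω, ← Complex.exp_add]
    simp
  have hωabs : ‖ω‖ = 1 := by
    rw [hω, mul_comm]
    exact Complex.norm_exp_ofReal_mul_I θ
  set g : ℕ → ℂ := fun p => ω ^ p * (d p : ℂ) with hg
  have hnorm : ∀ p, ‖g p‖ = d p := by
    intro p
    rw [hg]
    simp only [norm_mul, norm_pow, hωabs, one_pow, one_mul, Complex.norm_real,
      Real.norm_eq_abs, abs_of_pos (hdpos p)]
  -- summability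
  have hS : Summable (fun p : ℕ => g p • e p) := by
    have hof := he.orthogonalFamily (𝕜 := ℂ)
    have h1 : Summable (fun p => ‖g p‖ ^ 2) := by
      have h0 : (fun p => ‖g p‖ ^ 2) = fun p => d p ^ 2 := by
        funext p; rw [hnorm p]
      rw [h0]; exact hsum
    have h2 := (hof.summable_iff_norm_sq_summable g).mpr h1
    simpa [LinearIsometry.toSpanSingleton_apply] using h2
  set f : H := ∑' p, g p • e p with hf
  have hSf : HasSum (fun p : ℕ => g p • e p) f := hS.hasSum
  have hinner : ∀ q : ℕ, (inner ℂ (e q) f : ℂ) = g q := by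
    intro q
    have h1 : HasSum (fun p : ℕ => (inner ℂ (e q) (g p • e p) : ℂ)) (inner ℂ (e q) f) :=
      hSf.mapL (innerSL ℂ (e q))
    have h2 : (fun p : ℕ => (inner ℂ (e q) (g p • e p) : ℂ))
        = fun p => if p = q then g q else 0 := by
      funext p
      rw [inner_smul_right, orthonormal_iff_ite.mp he]
      rcases eq_or_ne p q with h | h
      · subst h; simp
      · simp [h, Ne.symm h]
    rw [h2] at h1
    exact h1.unique (hasSum_ite_eq q (g q))
  refine ⟨f, ?_, ?_⟩
  · intro h0
    have h1 := hinner 0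
    rw [h0, inner_zero_right] at h1
    rw [hg] at h1
    simp [hd0] at h1
  · intro p
    rw [hAe p, inner_add_left, inner_add_left, inner_smul_left, inner_smul_left,
      hinner (p+1), hinner p]
    have hbp := hb p
    have hkey := key p
    have hωne : ω ≠ 0 := Complex.exp_ne_zero _
    rcases Nat.eq_zero_or_pos p with hp | hp
    · subst hp
      rw [if_pos rfl, inner_zero_left, zero_add]
      rw [if_pos rfl, zero_add] at hkey
      have hkeyC := congrArg Complex.ofReal hkey
      rw [Complex.ofReal_mul] at hkeyC
      rw [hbp, hg]
      simp only [map_mul, map_neg, Complex.conj_I, Complex.conj_ofReal]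
      simp only [zero_add, pow_one, pow_zero, one_mul] at hkeyC ⊢
      linear_combination (Complex.I *
          ((Real.sqrt (((i + k)! : ℝ) / ((i + 0*k)! : ℝ)) : ℝ) : ℂ) * (d 1 : ℂ)) * hωconj
        + Complex.I * hkeyC
    · obtain ⟨q, rfl⟩ : ∃ q, p = q + 1 := ⟨p - 1, by omega⟩
      rw [if_neg (Nat.succ_ne_zero q), inner_smul_left, hinner]
      rw [if_neg (Nat.succ_ne_zero q), Nat.succ_sub_one] at hkey
      have hkeyC := congrArg Complex.ofReal hkey
      rw [Complex.ofReal_add, Complex.ofReal_mul, Complex.ofReal_mul] at hkeyC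
      rw [hc q, hb q, hbp, hg]
      simp only [Nat.succ_sub_one, map_mul, map_neg, Complex.conj_I, Complex.conj_ofReal,
        Complex.conj_conj]
      linear_combination (Complex.I * ω ^ (q+1)) * hkeyC
        + (Complex.I * ω ^ (q+1) *
            ((Real.sqrt (((i + (q+1+1)*k)! : ℝ) / ((i + (q+1)*k)! : ℝ)) : ℝ) : ℂ)
            * (d (q+1+1) : ℂ)) * hωconj
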